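/- Let d ≥ 1, q ≥ 2, Ω = {1,…,q}^{ℤ^d} with the Borel σ-algebra, and let ν be a probability measure on Ω with ν([η_{Λ_n}]) > 0 for all n and all η. For each x ∈ ℤ^d and j ∈ {1,…,q}, let c_x(·, j) : Ω → ℝ be bounded measurable with inf c_x ≥ δ > 0, and define Γ_n(x, j, η) = ∫_{[η_{Λ_n}]} c_x(ω, j) dν(ω), α_n(x) = Σ_{η_{Λ_n}} Σ_{i ≠ η_x} Φ( Γ_n(x, η_x, η^{x,i}), Γ_n(x, i, η) ), and β_n(x) = Σ_{η_{Λ_n}} Σ_{i ≠ η_x} | Γ_n(x, η_x, η^{x,i}) − Γ_n(x, i, η) |. Then for every n ≥ 1 and x ∈ Λ_n, β_n(x)² ≤ q · ( sup_{ω ∈ Ω, j} c_x(ω, j) ) · α_n(x). -/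

import Mathlib

open MeasureTheory

/-- The centred box `Λ_n = ([-n,n] ∩ ℤ)^d` in `ℤ^d`. -/
noncomputable def centredBox (d : ℕ) (n : ℕ) : Finset (Fin d → ℤ) :=
  Fintype.piFinset fun _ => Finset.Icc (-(n : ℤ)) (n : ℤ)

/-- The cylinder set `[η_{Λ_n}]` determined by a configuration `σ` on `Λ_n`. -/
def cylinder (d q n : ℕ) (σ : ↥(centredBox d n) → Fin q) :
    Set ((Fin d → ℤ) → Fin q) :=
  {ω | ∀ z : ↥(centredBox d n), ω z.1 = σ z}

/-- `Γ_n(x, j, η) = ∫_{[η_{Λ_n}]} c_x(ω, j) dν(ω)`. -/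
noncomputable def Gamma (d q : ℕ) (ν : Measure ((Fin d → ℤ) → Fin q))
    (c : (Fin d → ℤ) → Fin q → ((Fin d → ℤ) → Fin q) → ℝ) (n : ℕ)
    (x : Fin d → ℤ) (j : Fin q) (σ : ↥(centredBox d n) → Fin q) : ℝ :=
  ∫ ω in cylinder d q n σ, c x j ω ∂ν

/-- The kernel `Φ(u,v) = (u − v)(log u − log v)`. -/
noncomputable def Phi (u v : ℝ) : ℝ := (u - v) * (Real.log u - Real.log v)

/-- `α_n(x) = Σ_{η_{Λ_n}} Σ_{i ≠ η_x} Φ(Γ_n(x, η_x, η^{x,i}), Γ_n(x, i, η))`. -/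
noncomputable def alpha (d q : ℕ) (ν : Measure ((Fin d → ℤ) → Fin q))
    (c : (Fin d → ℤ) → Fin q → ((Fin d → ℤ) → Fin q) → ℝ) (n : ℕ)
    (x : Fin d → ℤ) : ℝ :=
  if hx : x ∈ centredBox d n then
    ∑ σ : ↥(centredBox d n) → Fin q,
      ∑ i ∈ Finset.univ.filter fun i : Fin q => i ≠ σ ⟨x, hx⟩,
        Phi (Gamma d q ν c n x (σ ⟨x, hx⟩) (Function.update σ ⟨x, hx⟩ i))
          (Gamma d q ν c n x i σ)
  else 0

/-- `β_n(x) = Σ_{η_{Λ_n}} Σ_{i ≠ η_x} |Γ_n(x, η_x, η^{x,i}) − Γ_n(x, i, η)|`. -/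
noncomputable def beta (d q : ℕ) (ν : Measure ((Fin d → ℤ) → Fin q))
    (c : (Fin d → ℤ) → Fin q → ((Fin d → ℤ) → Fin q) → ℝ) (n : ℕ)
    (x : Fin d → ℤ) : ℝ :=
  if hx : x ∈ centredBox d n then
    ∑ σ : ↥(centredBox d n) → Fin q,
      ∑ i ∈ Finset.univ.filter fun i : Fin q => i ≠ σ ⟨x, hx⟩,
        |Gamma d q ν c n x (σ ⟨x, hx⟩) (Function.update σ ⟨x, hx⟩ i) -
          Gamma d q ν c n x i σ|
  else 0

lemma key_log (t : ℝ) (ht : 1 ≤ t) : 2 * (t - 1) ≤ (t + 1) * Real.log t := by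
  set g : ℝ → ℝ := fun r => (r + 1) * Real.log r - 2 * (r - 1) with hg
  have hderiv : ∀ s : ℝ, 0 < s →
      HasDerivAt g (Real.log s + (s + 1) * s⁻¹ - 2) s := by
    intro s hs
    have h1 : HasDerivAt (fun r : ℝ => r + 1) 1 s := (hasDerivAt_id s).add_const 1
    have h2 : HasDerivAt Real.log s⁻¹ s := Real.hasDerivAt_log (ne_of_gt hs)
    have h3 := h1.mul h2
    have h4 : HasDerivAt (fun r : ℝ => 2 * (r - 1)) 2 s := by
      simpa using ((hasDerivAt_id s).sub_const 1).const_mul 2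
    have h5 := h3.sub h4
    simp only [one_mul] at h5
    exact h5
  have hmono : MonotoneOn g (Set.Ici (1 : ℝ)) := by
    apply monotoneOn_of_deriv_nonneg (convex_Ici 1)
    · apply ContinuousOn.sub
      · exact (continuous_add_right 1).continuousOn.mul
          (Real.continuousOn_log.mono
            (by intro r hr; simp at hr ⊢; intro h; simp [h] at hr; linarith))
      · exact (continuous_const.mul (continuous_sub_right 1)).continuousOn
    · intro s hs
      rw [interior_Ici] at hs
      exact ((hderiv s (by linarith [Set.mem_Ioi.mp hs])).differentiableAt).differentiableWithinAt
    · intro s hs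
      rw [interior_Ici] at hs
      have hs1 : (1:ℝ) < s := hs
      have hs0 : (0:ℝ) < s := by linarith
      rw [(hderiv s hs0).deriv]
      have hlog : 1 - s⁻¹ ≤ Real.log s := Real.one_sub_inv_le_log_of_pos hs0
      have : (s + 1) * s⁻¹ = 1 + s⁻¹ := by field_simp
      rw [this]; linarith
  have h1 : g 1 ≤ g t := hmono (Set.self_mem_Ici) ht ht
  simp [hg] at h1
  linarith

lemma sq_sub_le_phi_mul (u v : ℝ) (hu : 0 < u) (hv : 0 < v) :
    (u - v) ^ 2 ≤ Phi u v * ((u + v) / 2) := by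
  have main : ∀ a b : ℝ, 0 < a → 0 < b → b ≤ a →
      2 * (a - b) ≤ (a + b) * (Real.log a - Real.log b) := by
    intro a b ha hb h
    have ht : 1 ≤ a / b := (one_le_div hb).2 h
    have hk := key_log (a / b) ht
    rw [Real.log_div (ne_of_gt ha) (ne_of_gt hb)] at hk
    have hk2 := mul_le_mul_of_nonneg_left hk (le_of_lt hb)
    have e1 : b * (2 * (a / b - 1)) = 2 * (a - b) := by field_simp
    have e2 : b * (a / b + 1) = a + b := by field_simp
    calc 2 * (a - b) = b * (2 * (a / b - 1)) := e1.symm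
      _ ≤ b * ((a / b + 1) * (Real.log a - Real.log b)) := hk2
      _ = b * (a / b + 1) * (Real.log a - Real.log b) := by ring
      _ = (a + b) * (Real.log a - Real.log b) := by rw [e2]
  unfold Phi
  rcases le_total v u with h | h
  · have := main u v hu hv h
    nlinarith [sub_nonneg.2 h]
  · have := main v u hv hu h
    nlinarith [sub_nonneg.2 h]

lemma Phi_nonneg (u v : ℝ) (hu : 0 < u) (hv : 0 < v) : 0 ≤ Phi u v := by
  unfold Phi
  rcases le_total u v with h | h
  · have := Real.log_le_log hu h
    nlinarith
  · have := Real.log_le_log hv h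
    nlinarith


/-- The estimate `β_n(x)² ≤ q · (sup_{ω, j} c_x(ω, j)) · α_n(x)`. -/
theorem beta_sq_le (d q : ℕ) (hd : 1 ≤ d) (hq : 2 ≤ q)
    (ν : Measure ((Fin d → ℤ) → Fin q)) [IsProbabilityMeasure ν]
    (hν : ∀ (n : ℕ) (σ : ↥(centredBox d n) → Fin q), 0 < ν (cylinder d q n σ))
    (c : (Fin d → ℤ) → Fin q → ((Fin d → ℤ) → Fin q) → ℝ)
    (hc_meas : ∀ x j, Measurable (c x j))
    (hc_bdd : ∀ x, ∃ M : ℝ, ∀ j ω, c x j ω ≤ M)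
    (δ : ℝ) (hδ : 0 < δ) (hc_lb : ∀ x j ω, δ ≤ c x j ω)
    (n : ℕ) (hn : 1 ≤ n) (x : Fin d → ℤ) (hx : x ∈ centredBox d n) :
    beta d q ν c n x ^ 2 ≤
      (q : ℝ) * (⨆ p : ((Fin d → ℤ) → Fin q) × Fin q, c x p.2 p.1) *
        alpha d q ν c n x := by
  classical
  obtain ⟨M, hM⟩ := hc_bdd x
  haveI : NeZero q := ⟨by omega⟩
  set S : ℝ := ⨆ p : ((Fin d → ℤ) → Fin q) × Fin q, c x p.2 p.1 with hSdef
  have hbdd : BddAbove (Set.range fun p : ((Fin d → ℤ) → Fin q) × Fin q => c x p.2 p.1) :=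
    ⟨M, by rintro _ ⟨p, rfl⟩; exact hM _ _⟩
  have hcS : ∀ (j : Fin q) (ω : (Fin d → ℤ) → Fin q), c x j ω ≤ S :=
    fun j ω => le_ciSup hbdd (ω, j)
  have hSpos : 0 < S :=
    lt_of_lt_of_le hδ ((hc_lb x 0 (fun _ => 0)).trans (hcS 0 (fun _ => 0)))
  -- measurability of cylinders
  have hcylm : ∀ σ : ↥(centredBox d n) → Fin q, MeasurableSet (cylinder d q n σ) := by
    intro σ
    have : _root_.cylinder d q n σ =
        ⋂ z : ↥(centredBox d n), (fun ω : (Fin d → ℤ) → Fin q => ω z.1) ⁻¹' {σ z} := by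
      ext ω
      simp only [_root_.cylinder, Set.mem_setOf_eq, Set.mem_iInter, Set.mem_preimage,
        Set.mem_singleton_iff]
    rw [this]
    exact MeasurableSet.iInter fun z => (measurable_pi_apply _) (measurableSet_singleton _)
  -- integrability
  have hint : ∀ j : Fin q, Integrable (c x j) ν := by
    intro j
    refine Integrable.mono' (integrable_const S) (hc_meas x j).aestronglyMeasurable ?_
    exact Filter.Eventually.of_forall fun ω => by
      rw [Real.norm_eq_abs, abs_of_pos (lt_of_lt_of_le hδ (hc_lb x j ω))]; exact hcS j ω
  -- Gamma bounds
  have hGl : ∀ (j : Fin q) (σ : ↥(centredBox d n) → Fin q),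
      δ * (ν (cylinder d q n σ)).toReal ≤ Gamma d q ν c n x j σ := by
    intro j σ
    have h := setIntegral_mono_on (μ := ν) (s := cylinder d q n σ)
      (f := fun _ => δ) (g := c x j)
      (integrableOn_const (measure_ne_top _ _))
      ((hint j).integrableOn) (hcylm σ) (fun ω _ => hc_lb x j ω)
    rw [setIntegral_const, smul_eq_mul, mul_comm] at h
    exact h
  have hGu : ∀ (j : Fin q) (σ : ↥(centredBox d n) → Fin q),
      Gamma d q ν c n x j σ ≤ S * (ν (cylinder d q n σ)).toReal := by
    intro j σ
    have h := setIntegral_mono_on (μ := ν) (s := cylinder d q n σ)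
      (f := c x j) (g := fun _ => S)
      ((hint j).integrableOn)
      (integrableOn_const (measure_ne_top _ _))
      (hcylm σ) (fun ω _ => hcS j ω)
    rw [setIntegral_const, smul_eq_mul, mul_comm] at h
    exact h
  have hGpos : ∀ (j : Fin q) (σ : ↥(centredBox d n) → Fin q),
      0 < Gamma d q ν c n x j σ := fun j σ =>
    lt_of_lt_of_le
      (mul_pos hδ (ENNReal.toReal_pos (hν n σ).ne' (measure_ne_top ν _))) (hGl j σ)
  -- partition of unity
  have hpart : ∑ σ : ↥(centredBox d n) → Fin q, (ν (cylinder d q n σ)).toReal = 1 := by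
    have hdisj : Pairwise (Function.onFun Disjoint
        fun σ : ↥(centredBox d n) → Fin q => cylinder d q n σ) := by
      intro σ τ hne
      rw [Function.onFun, Set.disjoint_left]
      intro ω hω1 hω2
      exact hne (funext fun z => by rw [← hω1 z, ← hω2 z])
    have hcover : (⋃ σ : ↥(centredBox d n) → Fin q, cylinder d q n σ) = Set.univ := by
      ext ω
      simp only [Set.mem_iUnion, Set.mem_univ, iff_true]
      exact ⟨fun z => ω z.1, fun z => rfl⟩
    have h := measure_iUnion (μ := ν) hdisj hcylm
    rw [hcover, tsum_fintype, measure_univ] at h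
    rw [← ENNReal.toReal_sum (fun a _ => measure_ne_top ν _), ← h, ENNReal.toReal_one]
  -- abbreviations
  set x' : ↥(centredBox d n) := ⟨x, hx⟩ with hx'
  set G : Fin q → (↥(centredBox d n) → Fin q) → ℝ := fun j σ => Gamma d q ν c n x j σ with hG
  set F : Finset ((_ : ↥(centredBox d n) → Fin q) × Fin q) :=
    (Finset.univ : Finset (↥(centredBox d n) → Fin q)).sigma
      (fun σ => Finset.univ.filter fun i : Fin q => i ≠ σ x') with hF
  set u : ((_ : ↥(centredBox d n) → Fin q) × Fin q) → ℝ :=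
    fun k => G (k.1 x') (Function.update k.1 x' k.2) with hu
  set v : ((_ : ↥(centredBox d n) → Fin q) × Fin q) → ℝ := fun k => G k.2 k.1 with hv
  have hbeta : beta d q ν c n x = ∑ k ∈ F, |u k - v k| := by
    unfold beta
    rw [dif_pos hx, Finset.sum_sigma']
  have halpha : alpha d q ν c n x = ∑ k ∈ F, Phi (u k) (v k) := by
    unfold alpha
    rw [dif_pos hx, Finset.sum_sigma']
  -- the involution
  have hsum_uv : ∑ k ∈ F, u k = ∑ k ∈ F, v k := by
    apply Finset.sum_nbij' (i := fun k : ((_ : ↥(centredBox d n) → Fin q) × Fin q) =>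
        (⟨Function.update k.1 x' k.2, k.1 x'⟩ : (_ : ↥(centredBox d n) → Fin q) × Fin q))
      (j := fun k => ⟨Function.update k.1 x' k.2, k.1 x'⟩)
    · intro k hk
      simp only [hF, Finset.mem_sigma, Finset.mem_univ, Finset.mem_filter, true_and] at hk ⊢
      simp [Function.update_self]
      exact fun h => hk h.symm
    · intro k hk
      simp only [hF, Finset.mem_sigma, Finset.mem_univ, Finset.mem_filter, true_and] at hk ⊢
      simp [Function.update_self]
      exact fun h => hk h.symm
    · intro k hk
      obtain ⟨σ, i⟩ := k
      simp [Function.update_idem, Function.update_self, Function.update_eq_self]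
    · intro k hk
      obtain ⟨σ, i⟩ := k
      simp [Function.update_idem, Function.update_self, Function.update_eq_self]
    · intro k hk
      simp [hu, hv, Function.update_self]
  -- the weight sum bound
  have hW : ∑ k ∈ F, (u k + v k) / 2 ≤ (q : ℝ) * S := by
    have h1 : ∑ k ∈ F, (u k + v k) / 2 = ∑ k ∈ F, v k := by
      rw [← Finset.sum_div, Finset.sum_add_distrib, hsum_uv]
      ring
    rw [h1]
    have h2 : ∑ k ∈ F, v k ≤
        ∑ σ : ↥(centredBox d n) → Fin q, ∑ i : Fin q, G i σ := by
      rw [hF, Finset.sum_sigma]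
      apply Finset.sum_le_sum
      intro σ _
      apply Finset.sum_le_sum_of_subset_of_nonneg (Finset.filter_subset _ _)
      intro i _ _
      exact le_of_lt (hGpos i σ)
    refine h2.trans ?_
    have h3 : ∀ σ : ↥(centredBox d n) → Fin q,
        ∑ i : Fin q, G i σ ≤ (q : ℝ) * (S * (ν (cylinder d q n σ)).toReal) := by
      intro σ
      calc ∑ i : Fin q, G i σ ≤ ∑ _i : Fin q, S * (ν (cylinder d q n σ)).toReal :=
            Finset.sum_le_sum fun i _ => hGu i σ
        _ = (q : ℝ) * (S * (ν (cylinder d q n σ)).toReal) := by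
            simp [Finset.sum_const, nsmul_eq_mul]
    calc ∑ σ : ↥(centredBox d n) → Fin q, ∑ i : Fin q, G i σ
        ≤ ∑ σ : ↥(centredBox d n) → Fin q, (q : ℝ) * (S * (ν (cylinder d q n σ)).toReal) :=
          Finset.sum_le_sum fun σ _ => h3 σ
      _ = (q : ℝ) * S * ∑ σ : ↥(centredBox d n) → Fin q, (ν (cylinder d q n σ)).toReal := by
          rw [Finset.mul_sum]; exact Finset.sum_congr rfl fun σ _ => by ring
      _ = (q : ℝ) * S := by rw [hpart, mul_one]
  -- Cauchy-Schwarz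
  have hPhinn : ∀ k ∈ F, 0 ≤ Phi (u k) (v k) :=
    fun k _ => Phi_nonneg _ _ (hGpos _ _) (hGpos _ _)
  have hwnn : ∀ k ∈ F, (0:ℝ) ≤ (u k + v k) / 2 := by
    intro k _
    have := hGpos (k.1 x') (Function.update k.1 x' k.2)
    have := hGpos k.2 k.1
    simp only [hu, hv]
    positivity
  have hterm : ∀ k ∈ F, |u k - v k| ≤
      Real.sqrt (Phi (u k) (v k)) * Real.sqrt ((u k + v k) / 2) := by
    intro k hk
    rw [← Real.sqrt_mul (hPhinn k hk), ← Real.sqrt_sq_eq_abs]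
    exact Real.sqrt_le_sqrt (sq_sub_le_phi_mul _ _ (hGpos _ _) (hGpos _ _))
  have hbnn : 0 ≤ ∑ k ∈ F, |u k - v k| := Finset.sum_nonneg fun k _ => abs_nonneg _
  have hstep : (∑ k ∈ F, |u k - v k|) ^ 2 ≤
      (∑ k ∈ F, Phi (u k) (v k)) * (∑ k ∈ F, (u k + v k) / 2) := by
    calc (∑ k ∈ F, |u k - v k|) ^ 2
        ≤ (∑ k ∈ F, Real.sqrt (Phi (u k) (v k)) * Real.sqrt ((u k + v k) / 2)) ^ 2 := by
          apply pow_le_pow_left₀ hbnn (Finset.sum_le_sum hterm)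
      _ ≤ (∑ k ∈ F, Real.sqrt (Phi (u k) (v k)) ^ 2) *
            (∑ k ∈ F, Real.sqrt ((u k + v k) / 2) ^ 2) :=
          Finset.sum_mul_sq_le_sq_mul_sq F _ _
      _ = (∑ k ∈ F, Phi (u k) (v k)) * (∑ k ∈ F, (u k + v k) / 2) := by
          rw [Finset.sum_congr rfl fun k hk => Real.sq_sqrt (hPhinn k hk),
            Finset.sum_congr rfl fun k hk => Real.sq_sqrt (hwnn k hk)]
  have halnn : 0 ≤ ∑ k ∈ F, Phi (u k) (v k) := Finset.sum_nonneg hPhinn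
  rw [hbeta, halpha]
  calc (∑ k ∈ F, |u k - v k|) ^ 2
      ≤ (∑ k ∈ F, Phi (u k) (v k)) * (∑ k ∈ F, (u k + v k) / 2) := hstep
    _ ≤ (∑ k ∈ F, Phi (u k) (v k)) * ((q : ℝ) * S) :=
        mul_le_mul_of_nonneg_left hW halnn
    _ = (q : ℝ) * S * (∑ k ∈ F, Phi (u k) (v k)) := by ring
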